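/- Fix d ≥ 1 and x₀ ∈ ℝ^d = EuclideanSpace ℝ (Fin d). Let u ∈ ℝ^d and let M be a symmetric real d×d matrix. If for every twice continuously differentiable f : ℝ^d → ℝ one has ⟪u, ∇f(x₀)⟫ + (1/2)·trace(M · Hess f(x₀)) = 0, where ∇f(x₀) is the gradient and Hess f(x₀) the Hessian matrix of f at x₀, then u = 0 and M = 0. -/

import Mathlib

open RealInnerProductSpace

/-- The Hessian matrix of second partial derivatives of `f` at `s`. -/
noncomputable def hessMat {d : ℕ} (f : EuclideanSpace ℝ (Fin d) → ℝ)
    (s : EuclideanSpace ℝ (Fin d)) : Matrix (Fin d) (Fin d) ℝ :=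
  fun i j =>
    iteratedFDeriv ℝ 2 f s ![EuclideanSpace.single i 1, EuclideanSpace.single j 1]

/-- The controlled second-order generator
`(L^a f)(s) = ⟪b(s,a), ∇f(s)⟫ + (1/2)·trace(Q(s,a)·Hess f(s))`. -/
noncomputable def gen {d : ℕ} {A : Type*}
    (b : EuclideanSpace ℝ (Fin d) × A → EuclideanSpace ℝ (Fin d))
    (Q : EuclideanSpace ℝ (Fin d) × A → Matrix (Fin d) (Fin d) ℝ)
    (a : A) (f : EuclideanSpace ℝ (Fin d) → ℝ) (s : EuclideanSpace ℝ (Fin d)) : ℝ :=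
  ⟪b (s, a), gradient f s⟫ + (1 / 2) * (Q (s, a) * hessMat f s).trace

/-- The Hamiltonian `H[f](s) = ⨆_a ( r(s,a) + (L^a f)(s) )`. -/
noncomputable def ham {d : ℕ} {A : Type*}
    (b : EuclideanSpace ℝ (Fin d) × A → EuclideanSpace ℝ (Fin d))
    (Q : EuclideanSpace ℝ (Fin d) × A → Matrix (Fin d) (Fin d) ℝ)
    (r : EuclideanSpace ℝ (Fin d) × A → ℝ)
    (f : EuclideanSpace ℝ (Fin d) → ℝ) (s : EuclideanSpace ℝ (Fin d)) : ℝ :=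
  ⨆ a : A, (r (s, a) + gen b Q a f s)


variable {d : ℕ}

lemma lin_hess (k : Fin d) (x₀ : EuclideanSpace ℝ (Fin d)) :
    hessMat (fun x => EuclideanSpace.proj (𝕜 := ℝ) k x) x₀ = 0 := by
  funext i j
  have hfd : (fderiv ℝ (fun x => EuclideanSpace.proj (𝕜 := ℝ) k x))
      = fun _ => EuclideanSpace.proj (𝕜 := ℝ) k := by
    funext x; exact (EuclideanSpace.proj (𝕜 := ℝ) k).fderiv
  rw [hessMat]
  rw [iteratedFDeriv_two_apply, hfd]
  simp

lemma lin_grad (k : Fin d) (x₀ u : EuclideanSpace ℝ (Fin d)) :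
    ⟪u, gradient (fun x => EuclideanSpace.proj (𝕜 := ℝ) k x) x₀⟫ = u k := by
  have hfd : fderiv ℝ (fun x => EuclideanSpace.proj (𝕜 := ℝ) k x) x₀
      = EuclideanSpace.proj (𝕜 := ℝ) k := (EuclideanSpace.proj (𝕜 := ℝ) k).fderiv
  rw [real_inner_comm, gradient, hfd, InnerProductSpace.toDual_symm_apply]
  simp

lemma quad_hess (i j : Fin d) (x₀ : EuclideanSpace ℝ (Fin d)) :
    hessMat (fun x => EuclideanSpace.proj (𝕜 := ℝ) i x * EuclideanSpace.proj (𝕜 := ℝ) j x) x₀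
      = Matrix.single i j 1 + Matrix.single j i 1 := by
  set pi := EuclideanSpace.proj (𝕜 := ℝ) i
  set pj := EuclideanSpace.proj (𝕜 := ℝ) j
  set g : EuclideanSpace ℝ (Fin d) →L[ℝ] EuclideanSpace ℝ (Fin d) →L[ℝ] ℝ :=
    pi.smulRight pj + pj.smulRight pi with hg
  have hfd : fderiv ℝ (fun x => pi x * pj x) = fun x => g x := by
    funext x
    have := (pi.hasFDerivAt (x := x)).mul (pj.hasFDerivAt (x := x))
    rw [HasFDerivAt.fderiv (f := fun x => pi x * pj x) this]
    ext v
    simp [hg, ContinuousLinearMap.smulRight_apply]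
  funext k l
  rw [hessMat]
  rw [iteratedFDeriv_two_apply, hfd, g.fderiv]
  have hs : ∀ (a b : Fin d), (EuclideanSpace.proj (𝕜 := ℝ) a) (EuclideanSpace.single b (1:ℝ)) = if a = b then 1 else 0 := by
    intro a b; simp [EuclideanSpace.single_apply, eq_comm]
  simp only [hg, ContinuousLinearMap.add_apply, ContinuousLinearMap.smulRight_apply,
    smul_eq_mul, pi, pj, Matrix.cons_val_zero, Matrix.cons_val_one, Matrix.head_cons, hs,
    Matrix.add_apply, Matrix.single, Matrix.of_apply]
  split_ifs <;> simp_all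

/-- Separation lemma: if `⟪u, ∇f(x₀)⟫ + (1/2)·trace(M · Hess f(x₀)) = 0` for every
`C²` test function `f`, with `M` symmetric, then `u = 0` and `M = 0`. -/
theorem stmt_15 {d : ℕ} (hd : 1 ≤ d) (x₀ u : EuclideanSpace ℝ (Fin d))
    (M : Matrix (Fin d) (Fin d) ℝ) (hM : M.IsSymm)
    (hzero : ∀ f : EuclideanSpace ℝ (Fin d) → ℝ, ContDiff ℝ 2 f →
      ⟪u, gradient f x₀⟫ + (1 / 2) * (M * hessMat f x₀).trace = 0) :
    u = 0 ∧ M = 0 := by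
  have hu : u = 0 := by
    ext k
    have h := hzero (fun x => EuclideanSpace.proj (𝕜 := ℝ) k x)
      (EuclideanSpace.proj (𝕜 := ℝ) k).contDiff
    rw [lin_grad, lin_hess] at h
    simpa using h
  refine ⟨hu, ?_⟩
  ext i j
  have h := hzero (fun x => EuclideanSpace.proj (𝕜 := ℝ) i x * EuclideanSpace.proj (𝕜 := ℝ) j x)
    ((EuclideanSpace.proj (𝕜 := ℝ) i).contDiff.mul (EuclideanSpace.proj (𝕜 := ℝ) j).contDiff)
  rw [quad_hess, hu] at h
  have htr : (M * (Matrix.single i j 1 + Matrix.single j i 1)).trace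
      = M i j + M j i := by
    simp [Matrix.trace, Matrix.diag, Matrix.mul_apply, Matrix.add_apply,
      Matrix.single, Matrix.of_apply, mul_add, mul_ite,
      Finset.sum_add_distrib, Finset.sum_ite_eq, add_comm]
    simp [ite_and, Finset.sum_ite_eq]
  rw [htr] at h
  simp only [inner_zero_left, zero_add] at h
  have hsy : M j i = M i j := by
    have := congrFun (congrFun hM i) j
    simpa [Matrix.transpose_apply] using this
  simp only [Matrix.zero_apply]
  nlinarith [h, hsy]
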